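/- Let f be the function on 2n Boolean variables defined by f(x)=1 iff the number of ones in x equals exactly n. Then every model of f is isolated (every Hamming neighbor of a model is a non-model), f has exactly binomial(2n, n) models, and consequently any BNN representation of f has at least binomial(2n, n) prototypes. -/
import Mathlib


/-- The weight (number of ones) of a Boolean vector. -/
def wt {n : ℕ} (x : Fin n → Bool) : ℕ :=
  (Finset.univ.filter (fun i => x i = true)).card

/-- (P,N) is a Boolean Nearest Neighbor representation of f. -/
def IsBNN {n : ℕ} (f : (Fin n → Bool) → Bool)
    (P N : Finset (Fin n → Bool)) : Prop :=
  Disjoint P N ∧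
  (∀ a, f a = true → ∃ b ∈ P, ∀ c ∈ N, hammingDist a b < hammingDist a c) ∧
  (∀ a, f a = false → ∃ b ∈ N, ∀ c ∈ P, hammingDist a b < hammingDist a c)

lemma hammingDist_eq {m : ℕ} (x y : Fin m → Bool) :
    hammingDist x y = (Finset.univ.filter fun i => x i ≠ y i).card := rfl

lemma parity_lemma {m : ℕ} (x y : Fin m → Bool) :
    ((hammingDist x y : ZMod 2)) = (wt x : ZMod 2) + (wt y : ZMod 2) := by
  rw [hammingDist_eq, wt, wt, Finset.card_filter, Finset.card_filter,
    Finset.card_filter]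
  push_cast
  rw [← Finset.sum_add_distrib]
  apply Finset.sum_congr rfl
  intro i _
  cases hx : x i <;> cases hy : y i <;> simp [hx, hy] <;> decide

lemma neighbor_ne {n : ℕ} (x : Fin (2 * n) → Bool) (hx : wt x = n)
    (y : Fin (2 * n) → Bool) (hd : hammingDist x y = 1) : wt y ≠ n := by
  intro hy
  have := parity_lemma x y
  rw [hd, hx, hy] at this
  have h2 : ((n : ZMod 2) + n) = ((2 * n : ℕ) : ZMod 2) := by push_cast; ring
  rw [h2] at this
  have h3 : ((2 * n : ℕ) : ZMod 2) = 0 := by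
    rw [Nat.cast_mul, show ((2 : ℕ) : ZMod 2) = 0 from ZMod.natCast_self 2, zero_mul]
  rw [h3, Nat.cast_one] at this
  exact one_ne_zero this

/-- flip lemma: flipping a differing coordinate toward b -/
lemma flip_dist {m : ℕ} (x b : Fin m → Bool) (i : Fin m) (hi : x i ≠ b i) :
    hammingDist x (Function.update x i (b i)) = 1 ∧
    hammingDist (Function.update x i (b i)) b + 1 = hammingDist x b := by
  constructor
  · rw [hammingDist_eq]
    have : (Finset.univ.filter fun j => x j ≠ Function.update x i (b i) j) = {i} := by
      ext j
      simp only [Finset.mem_filter, Finset.mem_univ, true_and, Finset.mem_singleton]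
      by_cases h : j = i
      · subst h; simp [Function.update_self, hi]
      · simp only [Function.update_of_ne h, ne_eq, not_true_eq_false, false_iff]
        exact h
    rw [this, Finset.card_singleton]
  · rw [hammingDist_eq, hammingDist_eq]
    have hset : (Finset.univ.filter fun j => Function.update x i (b i) j ≠ b j)
        = (Finset.univ.filter fun j => x j ≠ b j).erase i := by
      ext j
      simp only [Finset.mem_filter, Finset.mem_univ, true_and, Finset.mem_erase]
      by_cases h : j = i
      · subst h; simp [Function.update_self]
      · simp only [Function.update_of_ne h]; tauto
    rw [hset, Finset.card_erase_of_mem (by simp [hi])]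
    have hmem : i ∈ Finset.univ.filter fun j => x j ≠ b j := by simp [hi]
    have : 0 < (Finset.univ.filter fun j => x j ≠ b j).card :=
      Finset.card_pos.mpr ⟨i, hmem⟩
    omega

/-- for f on 2n variables with f(x)=1 iff |x| = n exactly:
every model is isolated, there are exactly C(2n,n) models, and any BNN
representation of f has at least C(2n,n) prototypes. -/
theorem exact_half_weight_bnn_lower_bound (n : ℕ) :
    (∀ x : Fin (2 * n) → Bool, wt x = n →
      ∀ y : Fin (2 * n) → Bool, hammingDist x y = 1 → wt y ≠ n) ∧
    (Finset.univ.filter (fun x : Fin (2 * n) → Bool => wt x = n)).card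
      = Nat.choose (2 * n) n ∧
    (∀ P N : Finset (Fin (2 * n) → Bool),
      IsBNN (fun x => decide (wt x = n)) P N →
      Nat.choose (2 * n) n ≤ P.card + N.card) := by
  have count : (Finset.univ.filter (fun x : Fin (2 * n) → Bool => wt x = n)).card
      = Nat.choose (2 * n) n := by
    have hps : (Finset.powersetCard n (Finset.univ : Finset (Fin (2 * n)))).card
        = Nat.choose (2 * n) n := by
      rw [Finset.card_powersetCard, Finset.card_univ, Fintype.card_fin]
    rw [← hps]
    · apply Finset.card_bij (fun x _ => Finset.univ.filter fun i => x i = true)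
      · intro x hx
        simp only [Finset.mem_filter, Finset.mem_univ, true_and] at hx
        simp only [Finset.mem_powersetCard]
        exact ⟨Finset.subset_univ _, hx⟩
      · intro x hx y hy h
        funext i
        have : (i ∈ Finset.univ.filter fun j => x j = true) ↔
            (i ∈ Finset.univ.filter fun j => y j = true) := by rw [h]
        simp only [Finset.mem_filter, Finset.mem_univ, true_and] at this
        cases hxi : x i <;> cases hyi : y i <;> simp [hxi, hyi] at this ⊢
      · intro s hs
        simp only [Finset.mem_powersetCard] at hs
        refine ⟨fun i => decide (i ∈ s), ?_, ?_⟩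
        · simp only [Finset.mem_filter, Finset.mem_univ, true_and]
          show (Finset.univ.filter fun i => decide (i ∈ s) = true).card = n
          have : (Finset.univ.filter fun i => decide (i ∈ s) = true) = s := by
            ext i; simp
          rw [this, hs.2]
        · ext i; simp
  have isolated : ∀ x : Fin (2 * n) → Bool, wt x = n →
      ∀ y : Fin (2 * n) → Bool, hammingDist x y = 1 → wt y ≠ n :=
    fun x hx y hd => neighbor_ne x hx y hd
  refine ⟨isolated, count, ?_⟩
  intro P N hBNN
  obtain ⟨hdisj, hpos, hneg⟩ := hBNN
  -- every model is in P
  have models_in_P : (Finset.univ.filter fun x : Fin (2 * n) → Bool => wt x = n) ⊆ P := by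
    intro x hx
    simp only [Finset.mem_filter, Finset.mem_univ, true_and] at hx
    obtain ⟨b, hbP, hb⟩ := hpos x (by simp [hx])
    by_cases hxb : x = b
    · exact hxb ▸ hbP
    · exfalso
      have hdpos : hammingDist x b ≠ 0 := fun h => hxb (hammingDist_eq_zero.mp h)
      obtain ⟨i, hi⟩ : ∃ i, x i ≠ b i := by
        by_contra h
        push_neg at h
        exact hxb (funext h)
      set y := Function.update x i (b i) with hy
      obtain ⟨h1, h2⟩ := flip_dist x b i hi
      rw [← hy] at h1 h2
      have hyn : wt y ≠ n := isolated x hx y h1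
      obtain ⟨c, hcN, hc⟩ := hneg y (by simp [hyn])
      have hclt : hammingDist y c < hammingDist y b := hc b hbP
      have htri : hammingDist x c ≤ hammingDist x y + hammingDist y c :=
        hammingDist_triangle x y c
      have hbc : hammingDist x b < hammingDist x c := hb c hcN
      omega
  calc Nat.choose (2 * n) n
      = (Finset.univ.filter fun x : Fin (2 * n) → Bool => wt x = n).card := count.symm
    _ ≤ P.card := Finset.card_le_card models_in_P
    _ ≤ P.card + N.card := Nat.le_add_right _ _
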